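/- Let M be a connected lattice path matroid, and let S_1 and S_2 be proper subsets of E(M) with S_1 ∩ S_2 = {x} and M = P_x(M|S_1, M|S_2). If x is in no 2-element circuit of M, then x is a terminal element of both restrictions M|S_1 and M|S_2. -/

import Mathlib

open Matroid Set

namespace Matroid

variable {α : Type*}

/-- Deletion of a set of elements from a matroid. -/
def del (M : Matroid α) (D : Set α) : Matroid α := M ↾ (M.E \ D)

/-- Contraction of a set of elements, defined via duality: `M ／ C = (M✶ ＼ C)✶`. -/
def con (M : Matroid α) (C : Set α) : Matroid α := (M✶.del C)✶

/-- `N` is a minor of `M` if `N` arises from `M` by a contraction followed by a deletion. -/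
def IsMinorOf (N M : Matroid α) : Prop :=
  ∃ C D : Set α, Disjoint C D ∧ N = (M.con C).del D

/-- A circuit is a minimal dependent set. -/
def IsCircuit' (M : Matroid α) (C : Set α) : Prop :=
  M.Dep C ∧ ∀ D, M.Dep D → D ⊆ C → D = C

/-- A spanning circuit is a circuit whose closure is the ground set. -/
def IsSpanningCircuit (M : Matroid α) (C : Set α) : Prop :=
  M.IsCircuit' C ∧ M.Spanning C

/-- Two elements of a matroid are connected if they are equal or lie on a common circuit. -/
def ConnTo (M : Matroid α) (x y : α) : Prop :=
  (x = y ∧ x ∈ M.E) ∨ ∃ C, M.IsCircuit' C ∧ x ∈ C ∧ y ∈ C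

/-- A matroid is connected if its ground set is nonempty and every two elements of the
ground set are connected. -/
def IsConnected (M : Matroid α) : Prop :=
  M.E.Nonempty ∧ ∀ ⦃x y : α⦄, x ∈ M.E → y ∈ M.E → M.ConnTo x y

/-- A loop: an element whose singleton is dependent. -/
def IsLoop' (M : Matroid α) (x : α) : Prop := x ∈ M.E ∧ ¬ M.Indep {x}

/-- The rank of a set `X` in a matroid: the maximum cardinality of an independent
subset of `X` (for finite matroids). -/
noncomputable def rkOf (M : Matroid α) (X : Set α) : ℕ :=
  sSup {k | ∃ I ⊆ X, M.Indep I ∧ I.ncard = k}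

/-- The nullity of a set `X`: `η(X) = |X| − r(X)`. -/
noncomputable def etaOf (M : Matroid α) (X : Set α) : ℕ := X.ncard - M.rkOf X

/-- A flat is connected if the corresponding restriction is a connected matroid. -/
def ConnectedFlat (M : Matroid α) (F : Set α) : Prop :=
  M.IsFlat F ∧ (M ↾ F).IsConnected

/-- A pnc-flat: a proper nontrivial (i.e. dependent) connected flat. -/
def PncFlat (M : Matroid α) (F : Set α) : Prop :=
  M.IsFlat F ∧ F ⊂ M.E ∧ M.Dep F ∧ (M ↾ F).IsConnected

/-- A fundamental flat: a pnc-flat `F` such that `F ∩ C` is a basis of `F`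
for some spanning circuit `C` of the matroid. -/
def FundFlat (M : Matroid α) (F : Set α) : Prop :=
  M.PncFlat F ∧ ∃ C, M.IsSpanningCircuit C ∧ M.IsBasis (F ∩ C) F

end Matroid

/-- `X` is a partial transversal of the family `J`. -/
def IsPartialTransversal {α : Type*} {r : ℕ} (J : Fin r → Set α) (X : Set α) : Prop :=
  ∃ f : α → Fin r, Set.InjOn f X ∧ ∀ x ∈ X, x ∈ J (f x)

/-- The family `J` is a presentation of the transversal matroid `M`: a set `X ⊆ E(M)` is
independent in `M` iff it is a partial transversal of `J`. -/
def IsPresentationOf {α : Type*} {r : ℕ} (J : Fin r → Set α) (M : Matroid α) : Prop :=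
  (∀ i, J i ⊆ M.E) ∧ ∀ X ⊆ M.E, (M.Indep X ↔ IsPartialTransversal J X)

/-- An interval presentation of `M` with respect to a path order: `e` enumerates the ground
set in the path order, and the presentation consists of the intervals `[a i, b i]`, where
the `a i` are strictly increasing, the `b i` are strictly increasing and `a i ≤ b i`. -/
structure IntervalPres {α : Type*} (M : Matroid α) (n r : ℕ) where
  e : Fin n → α
  inj : Function.Injective e
  ground : Set.range e = M.E
  a : Fin r → Fin n
  b : Fin r → Fin n
  ha : StrictMono a
  hb : StrictMono b
  hab : ∀ i, a i ≤ b i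
  pres : IsPresentationOf (fun i => e '' Set.Icc (a i) (b i)) M

/-- The `i`-th interval of an interval presentation. -/
def IntervalPres.J {α : Type*} {M : Matroid α} {n r : ℕ}
    (P : IntervalPres M n r) (i : Fin r) : Set α :=
  P.e '' Set.Icc (P.a i) (P.b i)

/-- A lattice path matroid: a matroid admitting an interval presentation. -/
def IsLPM {α : Type*} (M : Matroid α) : Prop :=
  ∃ n r : ℕ, Nonempty (IntervalPres M n r)

/-- A terminal element: one that is least or greatest in some path order. -/
def IsTerminal {α : Type*} (M : Matroid α) (x : α) : Prop :=
  ∃ (n r : ℕ) (P : IntervalPres M n r) (i : Fin n),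
    P.e i = x ∧ (i.1 = 0 ∨ i.1 = n - 1)

/-- A nested matroid: a lattice path matroid with an interval presentation in which the set
of lower endpoints, or the set of upper endpoints, is an interval in the path order. -/
def IsNested {α : Type*} (M : Matroid α) : Prop :=
  ∃ (n r : ℕ) (P : IntervalPres M n r),
    (Set.range P.a).OrdConnected ∨ (Set.range P.b).OrdConnected

/-- `M` is (isomorphic to) the uniform matroid `U_{r,k}`: `k` elements, and the independent
sets are exactly the subsets of the ground set with at most `r` elements. -/
def IsUniformOf {α : Type*} (M : Matroid α) (r k : ℕ) : Prop :=
  M.E.Finite ∧ M.E.ncard = k ∧ ∀ I ⊆ M.E, (M.Indep I ↔ I.ncard ≤ r)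

/-- `M` is (isomorphic to) an `n`-element circuit `U_{n-1,n}`. -/
def IsCircuitMatroidOf {α : Type*} (M : Matroid α) (n : ℕ) : Prop :=
  IsUniformOf M (n - 1) n

/-- `N` is the truncation of `M` to rank `k`. -/
def IsTruncationOf {α : Type*} (N M : Matroid α) (k : ℕ) : Prop :=
  N.E = M.E ∧ ∀ I, N.Indep I ↔ (M.Indep I ∧ I.ncard ≤ k)

/-- `N` is the direct sum of `M₁` and `M₂`. -/
def IsDirectSumOf {α : Type*} (N M₁ M₂ : Matroid α) : Prop :=
  Disjoint M₁.E M₂.E ∧ N.E = M₁.E ∪ M₂.E ∧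
    ∀ I, N.Indep I ↔ (I ⊆ N.E ∧ M₁.Indep (I ∩ M₁.E) ∧ M₂.Indep (I ∩ M₂.E))

/-- `N` is the parallel connection `P_x(M₁, M₂)`, described by its bases. -/
def IsParallelConnOf {α : Type*} (N M₁ M₂ : Matroid α) (x : α) : Prop :=
  M₁.E ∩ M₂.E = {x} ∧ ¬ (M₁.IsLoop' x ∧ M₂.IsLoop' x) ∧ N.E = M₁.E ∪ M₂.E ∧
    ∀ B, N.IsBase B ↔
      ((x ∈ B ∧ M₁.IsBase (B ∩ M₁.E) ∧ M₂.IsBase (B ∩ M₂.E)) ∨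
       (x ∉ B ∧ ((M₁.IsBase (B ∩ M₁.E) ∧ M₂.IsBase ((B ∩ M₂.E) ∪ {x})) ∨
                 (M₂.IsBase (B ∩ M₂.E) ∧ M₁.IsBase ((B ∩ M₁.E) ∪ {x})))))

/-- `N` is the free extension `M + x` of `M` by the element `x`. -/
def IsFreeExtOf {α : Type*} (N M : Matroid α) (x : α) : Prop :=
  x ∉ M.E ∧ N.E = insert x M.E ∧
    ∀ I, N.Indep I ↔ (I ⊆ N.E ∧ ((x ∉ I ∧ M.Indep I) ∨
        (x ∈ I ∧ M.Indep (I \ {x}) ∧ ¬ M.Spanning (I \ {x}))))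

/-- `M` is (isomorphic to) `P_m`, the truncation to rank `m` of the direct sum of two
`m`-element circuits. -/
def IsPMat {α : Type*} (M : Matroid α) (m : ℕ) : Prop :=
  ∃ U₁ U₂ S : Matroid α, IsCircuitMatroidOf U₁ m ∧ IsCircuitMatroidOf U₂ m ∧
    IsDirectSumOf S U₁ U₂ ∧ IsTruncationOf M S m

/-- `M` is (isomorphic to) `P'_n`, the truncation to rank `n` of the parallel connection,
at a common element, of two `n`-element circuits. -/
def IsP'Mat {α : Type*} (M : Matroid α) (n : ℕ) : Prop :=
  ∃ (U₁ U₂ S : Matroid α) (x : α), IsCircuitMatroidOf U₁ n ∧ IsCircuitMatroidOf U₂ n ∧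
    IsParallelConnOf S U₁ U₂ x ∧ IsTruncationOf M S n

/-- `M` is (isomorphic to) `A_n = P'_n + x`. -/
def IsAMat {α : Type*} (M : Matroid α) (n : ℕ) : Prop :=
  ∃ (N : Matroid α) (x : α), IsP'Mat N n ∧ IsFreeExtOf M N x

/-- `M` is (isomorphic to) `B_{n,k} = T_n(U_{n-1,n} ⊕ U_{n-1,n} ⊕ U_{k-1,k})`. -/
def IsBMat {α : Type*} (M : Matroid α) (n k : ℕ) : Prop :=
  ∃ U₁ U₂ U₃ S₁ S₂ : Matroid α, IsCircuitMatroidOf U₁ n ∧ IsCircuitMatroidOf U₂ n ∧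
    IsUniformOf U₃ (k - 1) k ∧ IsDirectSumOf S₁ U₁ U₂ ∧ IsDirectSumOf S₂ S₁ U₃ ∧
    IsTruncationOf M S₂ n

/-- `M` is (isomorphic to) `C_{n+k,k}`, the dual of `B_{n,k}`. -/
def IsCMat {α : Type*} (M : Matroid α) (n k : ℕ) : Prop := IsBMat M✶ n k

/-- `M` is (isomorphic to) `D_n = (P_{n-1} ⊕ U_{1,1}) + x`. -/
def IsDMat {α : Type*} (M : Matroid α) (n : ℕ) : Prop :=
  ∃ (P U S : Matroid α) (x : α), IsPMat P (n - 1) ∧ IsUniformOf U 1 1 ∧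
    IsDirectSumOf S P U ∧ IsFreeExtOf M S x

/-- `M` is (isomorphic to) `E_n`, the dual of `D_n`. -/
def IsEMat {α : Type*} (M : Matroid α) (n : ℕ) : Prop := IsDMat M✶ n

/-- `M` is (isomorphic to) the rank-3 wheel `W_3`, the cycle matroid of `K₄`: six elements,
rank 3, whose dependent 3-sets are the four triangles of `K₄`. -/
def IsWheel3 {α : Type*} (M : Matroid α) : Prop :=
  ∃ a b c d e f : α, ({a, b, c, d, e, f} : Set α).ncard = 6 ∧
    M.E = {a, b, c, d, e, f} ∧
    ∀ X ⊆ M.E, (M.Indep X ↔ X.ncard ≤ 3 ∧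
      X ≠ {a, b, f} ∧ X ≠ {a, c, e} ∧ X ≠ {b, c, d} ∧ X ≠ {d, e, f})

/-- `M` is (isomorphic to) the rank-3 whirl `W^3`, obtained from `W_3` by relaxing a
circuit-hyperplane: six elements, rank 3, with exactly three dependent 3-sets. -/
def IsWhirl3 {α : Type*} (M : Matroid α) : Prop :=
  ∃ a b c d e f : α, ({a, b, c, d, e, f} : Set α).ncard = 6 ∧
    M.E = {a, b, c, d, e, f} ∧
    ∀ X ⊆ M.E, (M.Indep X ↔ X.ncard ≤ 3 ∧
      X ≠ {a, b, f} ∧ X ≠ {a, c, e} ∧ X ≠ {b, c, d})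

/-- `M` is (isomorphic to) `R_4`: the parallel extension, at `x`, of the rank-4 matroid on
six elements whose ground set is the union of two 4-element circuits `{x,y,p,q}` and
`{x,y,u,v}` meeting in the independent set `{x,y}`, these circuits being its only
nonspanning circuits. -/
def IsR4Mat {α : Type*} (M : Matroid α) : Prop :=
  ∃ (S U : Matroid α) (x x' y p q u v : α),
    ({x, x', y, p, q, u, v} : Set α).ncard = 7 ∧
    S.E = {x, y, p, q, u, v} ∧
    (∀ X ⊆ S.E, (S.Indep X ↔ X.ncard ≤ 4 ∧
        ¬ ({x, y, p, q} : Set α) ⊆ X ∧ ¬ ({x, y, u, v} : Set α) ⊆ X)) ∧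
    U.E = {x, x'} ∧ (∀ B, U.IsBase B ↔ (B = {x} ∨ B = {x'})) ∧
    IsParallelConnOf M S U x

/-- `M` is (isomorphic to) `R_3`, the dual of `R_4`. -/
def IsR3Mat {α : Type*} (M : Matroid α) : Prop := IsR4Mat M✶

/-- `M` is isomorphic to a matroid in the list `E` of excluded minors of `L`. -/
def InExcludedList {α : Type*} (M : Matroid α) : Prop :=
  (∃ n, 3 ≤ n ∧ IsAMat M n) ∨
  (∃ n k, 2 ≤ k ∧ k ≤ n ∧ (IsBMat M n k ∨ IsCMat M n k)) ∨
  (∃ n, 4 ≤ n ∧ (IsDMat M n ∨ IsEMat M n)) ∨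
  IsWheel3 M ∨ IsWhirl3 M ∨ IsR3Mat M ∨ IsR4Mat M

/-- `M` is an excluded minor of the class `L` of lattice path matroids. -/
def IsExcludedMinorOfLPM {α : Type*} (M : Matroid α) : Prop :=
  M.Finite ∧ ¬ IsLPM M ∧ ∀ N : Matroid α, N.IsMinorOf M → N ≠ M → IsLPM N

section Comb

lemma strictMono_nat_add {m : ℕ} {φ : Fin m → ℕ} (hφ : StrictMono φ) :
    ∀ d (i j : Fin m), (j : ℕ) = i + d → φ i + d ≤ φ j := by
  intro d
  induction d with
  | zero => intro i j h; have : j = i := Fin.ext (by omega); simp [this]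
  | succ d ih =>
    intro i j h
    have hij : (i : ℕ) + d < m := by omega
    set j' : Fin m := ⟨(i : ℕ) + d, hij⟩ with hj'
    have h1 : (φ i : ℕ) + d ≤ φ j' := ih i j' rfl
    have h2 : φ j' < φ j := hφ (by rw [Fin.lt_def]; simp [hj']; omega)
    omega

lemma strictMono_nat_le {m : ℕ} {φ : Fin m → ℕ} (hφ : StrictMono φ) {i j : Fin m}
    (hij : i ≤ j) : φ i + ((j : ℕ) - i) ≤ φ j :=
  strictMono_nat_add hφ ((j : ℕ) - (i : ℕ)) i j (by have := Fin.le_def.1 hij; omega)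

lemma strictMono_val_le {m r : ℕ} {φ : Fin m → Fin r} (hφ : StrictMono φ) {i j : Fin m}
    (hij : i ≤ j) : (φ i : ℕ) + ((j : ℕ) - i) ≤ φ j :=
  strictMono_nat_le (fun u v huv => by exact_mod_cast hφ huv) hij

/-- Any injective matching of a strictly increasing sequence into a monotone family of
intervals can be replaced by a strictly monotone matching. -/
lemma strictMono_val_ge {m r : ℕ} {φ : Fin m → Fin r} (hφ : StrictMono φ) (κ : Fin m) :
    (κ : ℕ) ≤ (φ κ : ℕ) := by
  have h0 : 0 < m := κ.pos
  have h1 : (⟨0, h0⟩ : Fin m) ≤ κ := Fin.le_def.2 (Nat.zero_le _)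
  have := strictMono_val_le hφ h1
  simp at this
  omega

lemma exists_strictMono_matching {r m : ℕ} {a c : Fin r → ℕ} (ha : Monotone a)
    (hc : Monotone c) {x : Fin m → ℕ} (hx : StrictMono x) {g : Fin m → Fin r}
    (hg : Function.Injective g) (hbd : ∀ κ, a (g κ) ≤ x κ ∧ x κ ≤ c (g κ)) :
    ∃ φ : Fin m → Fin r, StrictMono φ ∧ ∀ κ, a (φ κ) ≤ x κ ∧ x κ ≤ c (φ κ) := by
  classical
  have hcard : (Finset.univ.image g).card = m := by
    rw [Finset.card_image_of_injective _ hg, Finset.card_univ, Fintype.card_fin]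
  set T := Finset.univ.image g with hT
  let iso := T.orderIsoOfFin hcard
  have hmemT : ∀ κ, g κ ∈ T := fun κ => Finset.mem_image_of_mem g (Finset.mem_univ κ)
  refine ⟨fun κ => (iso κ : Fin r), fun κ κ' h => iso.strictMono h, ?_⟩
  have key_le : ∀ κ : Fin m, ∃ κ'' ≤ κ, (iso κ : Fin r) ≤ g κ'' := by
    intro κ
    by_contra hcon
    push_neg at hcon
    have hFmaps : ∀ κ'' ∈ Finset.Iic κ, iso.symm ⟨g κ'', hmemT κ''⟩ ∈ Finset.Iio κ := by
      intro κ'' h''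
      have h1 : g κ'' < (iso κ : Fin r) := hcon κ'' (Finset.mem_Iic.1 h'')
      have : iso (iso.symm ⟨g κ'', hmemT κ''⟩) < iso κ := by
        rwa [OrderIso.apply_symm_apply]
      simpa using iso.lt_iff_lt.1 this
    have hinj : Set.InjOn (fun κ'' => iso.symm ⟨g κ'', hmemT κ''⟩) (Finset.Iic κ) := by
      intro u hu v hv huv
      simp only at huv
      have := iso.symm.injective huv
      exact hg (by simpa using this)
    have hle := Finset.card_le_card_of_injOn _ hFmaps hinj
    rw [Fin.card_Iic, Fin.card_Iio] at hle
    omega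
  have key_ge : ∀ κ : Fin m, ∃ κ'' , κ ≤ κ'' ∧ g κ'' ≤ (iso κ : Fin r) := by
    intro κ
    by_contra hcon
    push_neg at hcon
    have hFmaps : ∀ κ'' ∈ Finset.Ici κ, iso.symm ⟨g κ'', hmemT κ''⟩ ∈ Finset.Ioi κ := by
      intro κ'' h''
      have h1 : (iso κ : Fin r) < g κ'' := hcon κ'' (Finset.mem_Ici.1 h'')
      have : iso κ < iso (iso.symm ⟨g κ'', hmemT κ''⟩) := by
        rw [OrderIso.apply_symm_apply]; exact h1
      simpa using iso.lt_iff_lt.1 this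
    have hinj : Set.InjOn (fun κ'' => iso.symm ⟨g κ'', hmemT κ''⟩) (Finset.Ici κ) := by
      intro u hu v hv huv
      simp only at huv
      have := iso.symm.injective huv
      exact hg (by simpa using this)
    have hle := Finset.card_le_card_of_injOn _ hFmaps hinj
    rw [Fin.card_Ici, Fin.card_Ioi] at hle
    omega
  intro κ
  obtain ⟨κ₁, hκ₁le, hκ₁⟩ := key_le κ
  obtain ⟨κ₂, hκ₂le, hκ₂⟩ := key_ge κ
  constructor
  · exact le_trans (le_trans (ha hκ₁) (hbd κ₁).1) (hx.monotone hκ₁le)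
  · exact le_trans (hx.monotone hκ₂le) (le_trans (hbd κ₂).2 (hc hκ₂))

/-- The clipping lemma: a strictly monotone matching into a staircase family of intervals,
where all matched elements are `≤ p`, can be pushed into the clipped staircase. -/
lemma exists_clipped_matching {r m : ℕ} {a b : Fin r → ℕ} (ha : StrictMono a)
    (hb : StrictMono b) {i₁ : Fin r} {p : ℕ} (hai₁ : a i₁ ≤ p)
    (hmax : ∀ i, a i ≤ p → i ≤ i₁)
    {x : Fin m → ℕ} (hx : StrictMono x) (hxp : ∀ κ, x κ ≤ p)
    {φ : Fin m → Fin r} (hφ : StrictMono φ) (hbd : ∀ κ, a (φ κ) ≤ x κ ∧ x κ ≤ b (φ κ)) :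
    ∃ ψ : Fin m → Fin r, StrictMono ψ ∧ ∀ κ, ψ κ ≤ i₁ ∧ a (ψ κ) ≤ x κ ∧ x κ ≤ b (ψ κ) ∧
      x κ + ((i₁ : ℕ) - (ψ κ : ℕ)) ≤ p := by
  classical
  -- M κ : largest interval index whose left endpoint is ≤ x κ
  have hMne : ∀ κ : Fin m, (Finset.univ.filter (fun j => a j ≤ x κ)).Nonempty :=
    fun κ => ⟨φ κ, by simp [(hbd κ).1]⟩
  set Mf : Fin m → Fin r := fun κ => (Finset.univ.filter (fun j => a j ≤ x κ)).max' (hMne κ)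
    with hMf
  have hMa : ∀ κ, a (Mf κ) ≤ x κ := by
    intro κ
    have := (Finset.univ.filter (fun j => a j ≤ x κ)).max'_mem (hMne κ)
    simpa [hMf] using (Finset.mem_filter.1 this).2
  have hMub : ∀ κ j, a j ≤ x κ → j ≤ Mf κ := by
    intro κ j hj
    exact Finset.le_max' _ j (by simp [hj])
  have hMφ : ∀ κ, φ κ ≤ Mf κ := fun κ => hMub κ (φ κ) (hbd κ).1
  have hMi₁ : ∀ κ, Mf κ ≤ i₁ := fun κ => hmax (Mf κ) (le_trans (hMa κ) (hxp κ))
  -- terms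
  set term : Fin m → Fin m → ℕ := fun κ lam => (Mf lam : ℕ) - ((lam : ℕ) - (κ : ℕ))
    with hterm
  have htermκ : ∀ κ, term κ κ = (Mf κ : ℕ) := by intro κ; simp [hterm]
  -- ψ' κ = min over lam ≥ κ of term κ lam
  have hne2 : ∀ κ : Fin m, ((Finset.Ici κ).image (term κ)).Nonempty :=
    fun κ => ⟨term κ κ, Finset.mem_image_of_mem _ (Finset.mem_Ici.2 le_rfl)⟩
  set ψ' : Fin m → ℕ := fun κ => ((Finset.Ici κ).image (term κ)).min' (hne2 κ) with hψ'
  have hψ'le : ∀ κ lam, κ ≤ lam → ψ' κ ≤ term κ lam := by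
    intro κ lam h
    exact Finset.min'_le _ _ (Finset.mem_image_of_mem _ (Finset.mem_Ici.2 h))
  have hψ'attain : ∀ κ, ∃ lam, κ ≤ lam ∧ ψ' κ = term κ lam := by
    intro κ
    have := Finset.min'_mem _ (hne2 κ)
    rw [Finset.mem_image] at this
    obtain ⟨lam, hlam, hl2⟩ := this
    exact ⟨lam, Finset.mem_Ici.1 hlam, hl2.symm⟩
  -- φ κ ≤ ψ' κ
  have hφψ : ∀ κ, (φ κ : ℕ) ≤ ψ' κ := by
    intro κ
    obtain ⟨lam, hlam, heq⟩ := hψ'attain κ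
    have h1 : (φ κ : ℕ) + ((lam : ℕ) - (κ : ℕ)) ≤ (φ lam : ℕ) := strictMono_val_le hφ hlam
    have h2 : (φ lam : ℕ) ≤ (Mf lam : ℕ) := Fin.le_def.1 (hMφ lam)
    rw [heq]
    simp only [hterm]
    omega
  have hψ'lt : ∀ κ, ψ' κ ≤ (Mf κ : ℕ) := fun κ => by
    simpa [htermκ] using hψ'le κ κ le_rfl
  have hψ'ltr : ∀ κ, ψ' κ < r := fun κ => lt_of_le_of_lt (hψ'lt κ) (Mf κ).isLt
  set ψ : Fin m → Fin r := fun κ => ⟨ψ' κ, hψ'ltr κ⟩ with hψ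
  have hψi₁ : ∀ κ, ψ κ ≤ i₁ := by
    intro κ
    rw [Fin.le_def]
    exact le_trans (hψ'lt κ) (Fin.le_def.1 (hMi₁ κ))
  refine ⟨ψ, ?_, ?_⟩
  · -- strict mono: enough to compare κ < κ'
    intro κ κ' hlt
    rw [Fin.lt_def]
    have hvv : ∀ κ0, (ψ κ0 : ℕ) = ψ' κ0 := fun κ0 => rfl
    obtain ⟨lam, hlam, heq⟩ := hψ'attain κ'
    have hκlam : κ ≤ lam := le_trans (le_of_lt hlt) hlam
    have h1 : ψ' κ ≤ term κ lam := hψ'le κ lam hκlam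
    have h2 : 1 ≤ ψ' κ' := by
      have := hφψ κ'
      have h3 : (κ' : ℕ) ≤ (φ κ' : ℕ) := strictMono_val_ge hφ κ'
      omega
    have hterm_lt : term κ lam + 1 ≤ term κ' lam := by
      have hl1 : (κ : ℕ) < κ' := Fin.lt_def.1 hlt
      have hl2 : (κ' : ℕ) ≤ lam := Fin.le_def.1 hlam
      have : (φ lam : ℕ) ≤ Mf lam := Fin.le_def.1 (hMφ lam)
      have hφlam : (φ κ' : ℕ) + ((lam : ℕ) - (κ' : ℕ)) ≤ (φ lam : ℕ) := strictMono_val_le hφ hlam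
      have hφκ' : (κ' : ℕ) ≤ (φ κ' : ℕ) := strictMono_val_ge hφ κ'
      simp only [hterm]
      omega
    have e1 := hvv κ
    have e2 := hvv κ'
    omega
  · intro κ
    refine ⟨hψi₁ κ, ?_, ?_, ?_⟩
    · -- a bound
      have : a (ψ κ) ≤ a (Mf κ) := ha.monotone (by rw [Fin.le_def]; exact hψ'lt κ)
      exact le_trans this (hMa κ)
    · -- b bound
      have : b (φ κ) ≤ b (ψ κ) := hb.monotone (by rw [Fin.le_def]; exact hφψ κ)
      exact le_trans (hbd κ).2 this
    · -- p bound
      obtain ⟨lam, hlam, heq⟩ := hψ'attain κ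
      have hxlam : x κ + ((lam : ℕ) - (κ : ℕ)) ≤ x lam := strictMono_nat_le hx hlam
      have hvv : (ψ κ : ℕ) = ψ' κ := rfl
      have hv2 : ψ' κ = (Mf lam : ℕ) - ((lam : ℕ) - (κ : ℕ)) := by
        rw [heq]
      by_cases hMcase : Mf lam = i₁
      · have hval := congrArg Fin.val hMcase
        have hxl := hxp lam
        have hlκ : (κ : ℕ) ≤ lam := Fin.le_def.1 hlam
        omega
      · -- Mf lam < i₁
        have hlt : (Mf lam : ℕ) < i₁ := by
          have := Fin.le_def.1 (hMi₁ lam)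
          have hne : (Mf lam : ℕ) ≠ (i₁ : ℕ) := fun h => hMcase (Fin.ext h)
          omega
        have hsucclt : (Mf lam : ℕ) + 1 < r := by
          have := i₁.isLt; omega
        set j : Fin r := ⟨(Mf lam : ℕ) + 1, hsucclt⟩ with hj
        have hja : x lam < a j := by
          by_contra hcon
          push_neg at hcon
          have := hMub lam j hcon
          rw [Fin.le_def] at this
          simp [hj] at this
        have hji₁ : j ≤ i₁ := by rw [Fin.le_def]; simp [hj]; omega
        have hchain : a j + ((i₁ : ℕ) - (j : ℕ)) ≤ a i₁ := strictMono_nat_le ha hji₁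
        have hlκ : (κ : ℕ) ≤ lam := Fin.le_def.1 hlam
        simp only [hj] at hja hchain ⊢
        omega

end Comb
section PresInfra

variable {α : Type*} {M : Matroid α} {n r : ℕ}

lemma IntervalPres.mem_J_iff (P : IntervalPres M n r) {i : Fin r} {j : Fin n} :
    P.e j ∈ P.e '' Set.Icc (P.a i) (P.b i) ↔ P.a i ≤ j ∧ j ≤ P.b i := by
  constructor
  · rintro ⟨j', hj', hj'e⟩
    have := P.inj hj'e
    subst this
    exact ⟨hj'.1, hj'.2⟩
  · intro h
    exact ⟨j, ⟨h.1, h.2⟩, rfl⟩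

lemma IntervalPres.ground_finite (P : IntervalPres M n r) : M.E.Finite := by
  rw [← P.ground]; exact Set.finite_range P.e

lemma IntervalPres.exists_pos (P : IntervalPres M n r) {y : α} (hy : y ∈ M.E) :
    ∃ j, P.e j = y := by rw [← P.ground] at hy; exact hy

lemma isPartialTransversal_reindex {r : ℕ} (J : Fin r → Set α) (σ : Equiv.Perm (Fin r))
    (X : Set α) : IsPartialTransversal (fun i => J (σ i)) X ↔ IsPartialTransversal J X := by
  constructor
  · rintro ⟨f, hinj, hmem⟩
    exact ⟨fun y => σ (f y), fun u hu v hv huv => hinj hu hv (σ.injective huv),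
      fun y hy => hmem y hy⟩
  · rintro ⟨f, hinj, hmem⟩
    refine ⟨fun y => σ.symm (f y), fun u hu v hv huv => hinj hu hv (σ.symm.injective huv),
      fun y hy => ?_⟩
    have : J (σ (σ.symm (f y))) = J (f y) := by rw [Equiv.apply_symm_apply]
    simpa only [this] using hmem y hy

/-- The reversal of an interval presentation. -/
def IntervalPres.rev (P : IntervalPres M n r) : IntervalPres M n r where
  e := P.e ∘ Fin.rev
  inj := P.inj.comp Fin.rev_injective
  ground := by
    rw [Set.range_comp, Set.range_eq_univ.2 Fin.rev_surjective, Set.image_univ, P.ground]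
  a := fun i => (P.b i.rev).rev
  b := fun i => (P.a i.rev).rev
  ha := fun i j hij => by
    rw [Fin.rev_lt_rev]
    exact P.hb (Fin.rev_lt_rev.2 hij)
  hb := fun i j hij => by
    rw [Fin.rev_lt_rev]
    exact P.ha (Fin.rev_lt_rev.2 hij)
  hab := fun i => Fin.rev_le_rev.2 (P.hab i.rev)
  pres := by
    have hIcc : ∀ k : Fin r, Fin.rev '' Set.Icc ((P.b k).rev) ((P.a k).rev)
        = Set.Icc (P.a k) (P.b k) := by
      intro k
      ext j
      simp only [Set.mem_image, Set.mem_Icc]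
      constructor
      · rintro ⟨j', ⟨h1, h2⟩, rfl⟩
        rw [Fin.le_def, Fin.val_rev] at h1 h2
        constructor
        · rw [Fin.le_def, Fin.val_rev]; omega
        · rw [Fin.le_def, Fin.val_rev]; omega
      · rintro ⟨h1, h2⟩
        refine ⟨j.rev, ⟨?_, ?_⟩, Fin.rev_rev j⟩
        · exact Fin.rev_le_rev.2 h2
        · exact Fin.rev_le_rev.2 h1
    have hfam : (fun i : Fin r => (P.e ∘ Fin.rev) '' Set.Icc ((P.b i.rev).rev) ((P.a i.rev).rev))
        = fun i => (fun i' => P.e '' Set.Icc (P.a i') (P.b i')) (Fin.revPerm i) := by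
      funext i
      rw [Set.image_comp, hIcc i.rev]
      rfl
    constructor
    · intro i
      rw [hfam]
      exact P.pres.1 _
    · intro X hX
      rw [hfam]
      exact (P.pres.2 X hX).trans (isPartialTransversal_reindex _ Fin.revPerm X).symm

lemma IntervalPres.rev_e (P : IntervalPres M n r) (j : Fin n) : P.rev.e j = P.e j.rev := rfl

/-- From a partial transversal, extract a strictly monotone matching of the positions. -/
lemma IntervalPres.exists_monotone_matching (P : IntervalPres M n r) {X : Set α}
    (hX : X ⊆ M.E)
    (hT : IsPartialTransversal (fun i => P.e '' Set.Icc (P.a i) (P.b i)) X) :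
    ∃ (m : ℕ) (xs : Fin m → Fin n) (φ : Fin m → Fin r), StrictMono xs ∧
      X = Set.range (P.e ∘ xs) ∧ StrictMono φ ∧
      ∀ κ, ((P.a (φ κ) : ℕ) ≤ (xs κ : ℕ) ∧ ((xs κ) : ℕ) ≤ (P.b (φ κ) : ℕ)) := by
  classical
  obtain ⟨f, hinj, hmem⟩ := hT
  set QF : Finset (Fin n) := Finset.univ.filter (fun j => P.e j ∈ X) with hQF
  set m := QF.card with hm
  set iso := QF.orderIsoOfFin rfl with hiso
  set xs : Fin m → Fin n := fun κ => (iso κ : Fin n) with hxs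
  have hxsmono : StrictMono xs := fun u v huv => iso.strictMono huv
  have hxsX : ∀ κ, P.e (xs κ) ∈ X := by
    intro κ
    have := (iso κ).2
    simp only [hQF, Finset.mem_filter] at this
    exact this.2
  have hXeq : X = Set.range (P.e ∘ xs) := by
    apply Set.eq_of_subset_of_subset
    · intro y hy
      obtain ⟨j, rfl⟩ := P.exists_pos (hX hy)
      have hjQ : j ∈ QF := by
        simp only [hQF, Finset.mem_filter]
        exact ⟨Finset.mem_univ _, hy⟩
      exact ⟨iso.symm ⟨j, hjQ⟩, by simp [hxs, Function.comp]⟩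
    · rintro y ⟨κ, rfl⟩
      exact hxsX κ
  set g : Fin m → Fin r := fun κ => f (P.e (xs κ)) with hg
  have hginj : Function.Injective g := by
    intro u v huv
    have h1 : P.e (xs u) = P.e (xs v) := hinj (hxsX u) (hxsX v) huv
    have := P.inj h1
    exact hxsmono.injective this
  have hgbd : ∀ κ, ((P.a (g κ) : ℕ) ≤ (xs κ : ℕ) ∧ ((xs κ) : ℕ) ≤ (P.b (g κ) : ℕ)) := by
    intro κ
    have := hmem _ (hxsX κ)
    rw [P.mem_J_iff] at this
    exact ⟨Fin.le_def.1 this.1, Fin.le_def.1 this.2⟩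
  have hamono : Monotone (fun i => (P.a i : ℕ)) := fun u v huv =>
    Fin.le_def.1 (P.ha.monotone huv)
  have hbmono : Monotone (fun i => (P.b i : ℕ)) := fun u v huv =>
    Fin.le_def.1 (P.hb.monotone huv)
  have hxmono : StrictMono (fun κ => ((xs κ) : ℕ)) := fun u v huv =>
    Fin.lt_def.1 (hxsmono huv)
  obtain ⟨φ, hφmono, hφbd⟩ := exists_strictMono_matching hamono hbmono hxmono hginj hgbd
  exact ⟨m, xs, φ, hxsmono, hXeq, hφmono, hφbd⟩

/-- From an injective matching of positions, build a partial transversal. -/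
lemma isPartialTransversal_of_matching {n' r' : ℕ} (hr' : 0 < r') (e' : Fin n' → α)
    (he' : Function.Injective e') (a' d' : Fin r' → Fin n') {m : ℕ}
    (xs : Fin m → Fin n') (hxs : Function.Injective xs) (ψ : Fin m → Fin r')
    (hψ : Function.Injective ψ)
    (hbd : ∀ κ, a' (ψ κ) ≤ xs κ ∧ xs κ ≤ d' (ψ κ)) :
    IsPartialTransversal (fun i => e' '' Set.Icc (a' i) (d' i)) (Set.range (e' ∘ xs)) := by
  classical
  set f : α → Fin r' := fun y => if h : ∃ κ, e' (xs κ) = y then ψ h.choose else ⟨0, hr'⟩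
    with hf
  have hfval : ∀ κ, f (e' (xs κ)) = ψ κ := by
    intro κ
    have hex : ∃ κ', e' (xs κ') = e' (xs κ) := ⟨κ, rfl⟩
    have : hex.choose = κ := hxs (he' hex.choose_spec)
    rw [hf]
    simp only [dif_pos hex, this]
  refine ⟨f, ?_, ?_⟩
  · rintro u ⟨κu, rfl⟩ v ⟨κv, rfl⟩ huv
    simp only [Function.comp] at huv ⊢
    rw [hfval, hfval] at huv
    rw [hψ huv]
  · rintro y ⟨κ, rfl⟩
    simp only [Function.comp]
    rw [hfval]
    exact ⟨xs κ, ⟨(hbd κ).1, (hbd κ).2⟩, rfl⟩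

end PresInfra
section Clip

variable {α : Type*} {M : Matroid α} {n r : ℕ}

lemma IntervalPres.isTerminal_restrict_init (P : IntervalPres M n r) (p : Fin n)
    (hxl : M.Indep {P.e p}) :
    IsTerminal (M ↾ (P.e '' {j | j ≤ p})) (P.e p) := by
  classical
  set S : Set α := P.e '' {j | j ≤ p} with hS
  have hSE : S ⊆ M.E := by
    rw [hS, ← P.ground]
    exact (Set.image_subset_range _ _).trans subset_rfl
  -- x = P.e p is in some interval
  have hi₀ : ∃ i, P.a i ≤ p := by
    have hsub : ({P.e p} : Set α) ⊆ M.E := by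
      rw [← P.ground]
      exact Set.singleton_subset_iff.2 ⟨p, rfl⟩
    obtain ⟨f, -, hmem⟩ := (P.pres.2 _ hsub).1 hxl
    have := hmem _ rfl
    rw [P.mem_J_iff] at this
    exact ⟨f (P.e p), this.1⟩
  have hne : ((Finset.univ.filter (fun i => P.a i ≤ p)).Nonempty) :=
    ⟨hi₀.choose, by simp [hi₀.choose_spec]⟩
  set i₁ : Fin r := (Finset.univ.filter (fun i => P.a i ≤ p)).max' hne with hi₁
  have hai₁ : P.a i₁ ≤ p := by
    have := (Finset.univ.filter (fun i => P.a i ≤ p)).max'_mem hne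
    rw [Finset.mem_filter] at this
    exact this.2
  have hmax : ∀ i, P.a i ≤ p → i ≤ i₁ := fun i hi => Finset.le_max' _ i (by simp [hi])
  have hi₁p : (i₁ : ℕ) ≤ (p : ℕ) :=
    le_trans (strictMono_val_ge P.ha i₁) (Fin.le_def.1 hai₁)
  have hcastlt : ∀ i : Fin ((i₁ : ℕ) + 1), (i : ℕ) < r := by
    intro i
    have h1 : (i : ℕ) < (i₁ : ℕ) + 1 := i.isLt
    have h2 : (i₁ : ℕ) < r := i₁.isLt
    omega
  set castR : Fin ((i₁ : ℕ) + 1) → Fin r := fun i => ⟨(i : ℕ), hcastlt i⟩ with hcastR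
  have hcast_le : ∀ i, castR i ≤ i₁ := by
    intro i
    rw [Fin.le_def]
    have := i.isLt
    simp only [hcastR]
    omega
  have hpn : (p : ℕ) < n := p.isLt
  have hinclt : ∀ j : Fin ((p : ℕ) + 1), (j : ℕ) < n := by
    intro j
    have := j.isLt
    omega
  set inc : Fin ((p : ℕ) + 1) → Fin n := fun j => ⟨(j : ℕ), hinclt j⟩ with hinc
  set e' : Fin ((p : ℕ) + 1) → α := fun j => P.e (inc j) with he'
  have he'inj : Function.Injective e' := by
    intro u v huv
    have := P.inj huv
    apply Fin.ext
    have : (inc u : ℕ) = (inc v : ℕ) := congrArg Fin.val this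
    simpa [hinc] using this
  -- the new intervals
  have ha'lt : ∀ i : Fin ((i₁ : ℕ) + 1), ((P.a (castR i)) : ℕ) < (p : ℕ) + 1 := by
    intro i
    have h1 : P.a (castR i) ≤ P.a i₁ := P.ha.monotone (hcast_le i)
    have := Fin.le_def.1 h1
    have := Fin.le_def.1 hai₁
    omega
  set a' : Fin ((i₁ : ℕ) + 1) → Fin ((p : ℕ) + 1) := fun i => ⟨(P.a (castR i) : ℕ), ha'lt i⟩
    with ha'
  have hd'lt : ∀ i : Fin ((i₁ : ℕ) + 1),
      min ((P.b (castR i)) : ℕ) ((p : ℕ) - (i₁ : ℕ) + (i : ℕ)) < (p : ℕ) + 1 := by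
    intro i
    have h1 : (i : ℕ) < (i₁ : ℕ) + 1 := i.isLt
    omega
  set d' : Fin ((i₁ : ℕ) + 1) → Fin ((p : ℕ) + 1) := fun i =>
    ⟨min ((P.b (castR i)) : ℕ) ((p : ℕ) - (i₁ : ℕ) + (i : ℕ)), hd'lt i⟩ with hd'
  have hcast_mono : ∀ {u v : Fin ((i₁ : ℕ) + 1)}, u < v → castR u < castR v := by
    intro u v huv
    rw [Fin.lt_def]
    simpa [hcastR] using Fin.lt_def.1 huv
  refine ⟨(p : ℕ) + 1, (i₁ : ℕ) + 1,
    { e := e', inj := he'inj, ground := ?_, a := a', b := d', ha := ?_, hb := ?_,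
       hab := ?_, pres := ?_ }, ⟨(p : ℕ), by omega⟩, ?_, Or.inr (by simp)⟩
  · -- ground
    rw [Matroid.restrict_ground_eq, hS]
    ext y
    constructor
    · rintro ⟨j', rfl⟩
      refine ⟨inc j', ?_, rfl⟩
      show inc j' ≤ p
      rw [Fin.le_def]
      exact Nat.lt_succ_iff.1 j'.isLt
    · rintro ⟨j, hj, rfl⟩
      have hjp : (j : ℕ) < (p : ℕ) + 1 := by
        have := Fin.le_def.1 (Set.mem_setOf_eq ▸ hj)
        omega
      exact ⟨⟨(j : ℕ), hjp⟩, congrArg P.e (Fin.ext rfl)⟩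
  · -- ha
    intro u v huv
    rw [Fin.lt_def]
    simpa [ha'] using Fin.lt_def.1 (P.ha (hcast_mono huv))
  · -- hb (strict mono of d')
    intro u v huv
    rw [Fin.lt_def]
    simp only [hd']
    have h1 := Fin.lt_def.1 (P.hb (hcast_mono huv))
    have h2 := Fin.lt_def.1 huv
    omega
  · -- hab
    intro i
    rw [Fin.le_def]
    simp only [ha', hd']
    have h1 := Fin.le_def.1 (P.hab (castR i))
    have h2 : ((P.a (castR i)) : ℕ) + ((i₁ : ℕ) - ((castR i) : ℕ)) ≤ ((P.a i₁) : ℕ) :=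
      strictMono_val_le P.ha (hcast_le i)
    have h3 := Fin.le_def.1 hai₁
    have h4 : ((castR i) : ℕ) = (i : ℕ) := rfl
    have h5 := i.isLt
    omega
  · -- pres
    constructor
    · intro i y hy
      rw [Matroid.restrict_ground_eq, hS]
      obtain ⟨j', hj', rfl⟩ := hy
      refine ⟨inc j', ?_, rfl⟩
      show inc j' ≤ p
      rw [Fin.le_def]
      exact Nat.lt_succ_iff.1 j'.isLt
    · intro X hX
      rw [Matroid.restrict_ground_eq] at hX
      rw [Matroid.restrict_indep_iff]
      constructor
      · rintro ⟨hXind, hXS⟩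
        have hXE : X ⊆ M.E := hXS.trans hSE
        have hT := (P.pres.2 X hXE).1 hXind
        obtain ⟨m, xs, φ, hxsm, hXeq, hφm, hφbd⟩ := P.exists_monotone_matching hXE hT
        have hxsp : ∀ κ, ((xs κ) : ℕ) ≤ (p : ℕ) := by
          intro κ
          have hmem : P.e (xs κ) ∈ S := hXS (hXeq ▸ ⟨κ, rfl⟩)
          rw [hS] at hmem
          obtain ⟨j, hj, hje⟩ := hmem
          have := P.inj hje
          subst this
          exact Fin.le_def.1 hj
        have hamono : StrictMono (fun i : Fin r => ((P.a i) : ℕ)) := fun u v huv =>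
          Fin.lt_def.1 (P.ha huv)
        have hbmono : StrictMono (fun i : Fin r => ((P.b i) : ℕ)) := fun u v huv =>
          Fin.lt_def.1 (P.hb huv)
        have hxmono : StrictMono (fun κ => ((xs κ) : ℕ)) := fun u v huv =>
          Fin.lt_def.1 (hxsm huv)
        obtain ⟨ψ, hψm, hψbd⟩ := exists_clipped_matching hamono hbmono
          (Fin.le_def.1 hai₁) (fun i hi => hmax i (Fin.le_def.2 hi)) hxmono hxsp hφm hφbd
        set ψ' : Fin m → Fin ((i₁ : ℕ) + 1) := fun κ => ⟨((ψ κ) : ℕ), by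
          have := Fin.le_def.1 (hψbd κ).1; omega⟩ with hψ'
        set xs' : Fin m → Fin ((p : ℕ) + 1) := fun κ => ⟨((xs κ) : ℕ), by
          have := hxsp κ; omega⟩ with hxs'
        have hXeq' : X = Set.range (e' ∘ xs') := by rw [hXeq]; rfl
        have hcastψ : ∀ κ, castR (ψ' κ) = ψ κ := by
          intro κ
          apply Fin.ext
          simp [hcastR, hψ']
        rw [hXeq']
        apply isPartialTransversal_of_matching (by omega) e' he'inj a' d' xs'
          (fun u v huv => by
            have h1 := congrArg Fin.val huv
            exact hxsm.injective (Fin.ext h1)) ψ'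
          (fun u v huv => by
            have h1 := congrArg Fin.val huv
            exact hψm.injective (Fin.ext h1))
        intro κ
        obtain ⟨hle, hab, hbb, hpb⟩ := hψbd κ
        constructor
        · rw [Fin.le_def]
          simp only [ha', hxs', hcastψ κ]
          exact hab
        · rw [Fin.le_def]
          simp only [hd', hxs', hcastψ κ]
          have h1 := Fin.le_def.1 hle
          have h2 : ((ψ' κ : Fin _) : ℕ) = ((ψ κ) : ℕ) := rfl
          omega
      · rintro ⟨f', hinj', hmem'⟩
        have hXS : X ⊆ S := hX
        refine ⟨?_, hXS⟩
        apply (P.pres.2 X (hXS.trans hSE)).2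
        refine ⟨fun y => castR (f' y), fun u hu v hv huv => ?_, fun y hy => ?_⟩
        · have h2 := congrArg Fin.val huv
          exact hinj' hu hv (Fin.ext h2)
        · obtain ⟨j', ⟨hj1, hj2⟩, rfl⟩ := hmem' y hy
          refine ⟨inc j', ⟨?_, ?_⟩, rfl⟩
          · rw [Fin.le_def]
            simpa [hinc, ha'] using Fin.le_def.1 hj1
          · rw [Fin.le_def]
            have := Fin.le_def.1 hj2
            simp only [hd'] at this
            simp only [hinc]
            omega
  · -- e' at position p is P.e p
    exact congrArg P.e (Fin.ext rfl)

end Clip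
section Interior

variable {α : Type*} {M : Matroid α} {n r : ℕ}

lemma Matroid.IsCircuit'.indep_of_ssubset {C D : Set α} (hC : M.IsCircuit' C) (hD : D ⊂ C) :
    M.Indep D := by
  by_contra h
  exact hD.ne (hC.2 D ⟨h, hD.subset.trans hC.1.subset_ground⟩ hD.subset)

lemma Matroid.exists_isCircuit_subset (hfin : M.E.Finite) {D : Set α} (hD : M.Dep D) :
    ∃ C, C ⊆ D ∧ M.IsCircuit' C := by
  obtain ⟨k, hk⟩ : ∃ k, D.ncard ≤ k := ⟨D.ncard, le_rfl⟩
  induction k generalizing D with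
  | zero =>
    have hDfin : D.Finite := hfin.subset hD.subset_ground
    have : D = ∅ := by
      rw [← Set.ncard_eq_zero hDfin]
      omega
    rw [this] at hD
    exact absurd M.empty_indep hD.1
  | succ k ih =>
    by_cases hmin : ∀ D', M.Dep D' → D' ⊆ D → D' = D
    · exact ⟨D, subset_rfl, hD, hmin⟩
    · push_neg at hmin
      obtain ⟨D', hD'dep, hD'sub, hD'ne⟩ := hmin
      have hss : D' ⊂ D := ⟨hD'sub, fun h => hD'ne (subset_antisymm hD'sub h)⟩
      have hDfin : D.Finite := hfin.subset hD.subset_ground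
      have : D'.ncard < D.ncard := Set.ncard_lt_ncard hss hDfin
      obtain ⟨C, hCsub, hC⟩ := ih hD'dep (by omega)
      exact ⟨C, hCsub.trans hD'sub, hC⟩

/-- The interior lemma for lattice path matroids. -/
lemma IntervalPres.interior_dep (P : IntervalPres M n r) {C : Set α} (hC : M.IsCircuit' C)
    {jq jl jh : Fin n} (hq : P.e jq ∉ C) (hcl : P.e jl ∈ C) (hch : P.e jh ∈ C)
    (hlo : jl < jq) (hhi : jq < jh) {w : α} (hw : w ∈ C) :
    M.Dep (insert (P.e jq) (C \ {w})) := by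
  classical
  have hCE : C ⊆ M.E := hC.1.subset_ground
  have hqE : P.e jq ∈ M.E := by rw [← P.ground]; exact ⟨jq, rfl⟩
  have hCfin : C.Finite := P.ground_finite.subset hCE
  -- position function
  set pos : α → Fin n := fun y => if h : ∃ j, P.e j = y then h.choose else jq with hposdef
  have hpos_e : ∀ j, pos (P.e j) = j := by
    intro j
    have h : ∃ j', P.e j' = P.e j := ⟨j, rfl⟩
    rw [hposdef]
    simp only [dif_pos h]
    exact P.inj h.choose_spec
  have hposE : ∀ y ∈ M.E, P.e (pos y) = y := by
    intro y hy
    obtain ⟨j, rfl⟩ := P.exists_pos hy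
    rw [hpos_e]
  have hdecode : ∀ (y : α) (i : Fin r), y ∈ M.E → y ∈ P.e '' Set.Icc (P.a i) (P.b i) →
      P.a i ≤ pos y ∧ pos y ≤ P.b i := by
    rintro y i hyE ⟨j', hj', rfl⟩
    rw [hpos_e]
    exact ⟨hj'.1, hj'.2⟩
  -- (S1): every interval containing q meets C
  have hS1 : ∀ i : Fin r, P.e jq ∈ P.e '' Set.Icc (P.a i) (P.b i) →
      ((P.e '' Set.Icc (P.a i) (P.b i)) ∩ C).Nonempty := by
    intro i hqi
    by_contra hdisj
    rw [Set.not_nonempty_iff_eq_empty] at hdisj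
    rw [P.mem_J_iff] at hqi
    have hCpos : ∀ c ∈ C, pos c < P.a i ∨ P.b i < pos c := by
      intro c hc
      by_contra hcon
      push_neg at hcon
      have h1 : P.a i ≤ pos c := hcon.1
      have h2 : pos c ≤ P.b i := hcon.2
      have : c ∈ (P.e '' Set.Icc (P.a i) (P.b i)) ∩ C :=
        ⟨⟨pos c, ⟨h1, h2⟩, hposE c (hCE hc)⟩, hc⟩
      rw [hdisj] at this
      exact this
    set Clow : Set α := {c | c ∈ C ∧ pos c < P.a i} with hClowdef
    set Chigh : Set α := {c | c ∈ C ∧ P.b i < pos c} with hChighdef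
    have hlmem : P.e jl ∈ Clow := by
      refine ⟨hcl, ?_⟩
      rw [hpos_e]
      rcases hCpos _ hcl with h | h
      · rwa [hpos_e] at h
      · rw [hpos_e] at h
        exact absurd (lt_trans h (lt_of_lt_of_le hlo hqi.2)) (lt_irrefl _)
    have hhmem : P.e jh ∈ Chigh := by
      refine ⟨hch, ?_⟩
      rw [hpos_e]
      rcases hCpos _ hch with h | h
      · rw [hpos_e] at h
        exact absurd (lt_trans (lt_of_le_of_lt hqi.1 hhi) h) (lt_irrefl _)
      · rwa [hpos_e] at h
    have hlnoth : P.e jh ∉ Clow := by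
      rintro ⟨-, h⟩
      rw [hpos_e] at h
      exact absurd (lt_trans (lt_of_le_of_lt hqi.1 hhi) h) (lt_irrefl _)
    have hhnotl : P.e jl ∉ Chigh := by
      rintro ⟨-, h⟩
      rw [hpos_e] at h
      exact absurd (lt_trans h (lt_of_lt_of_le hlo hqi.2)) (lt_irrefl _)
    have hlowss : Clow ⊂ C :=
      ⟨fun c hc => hc.1, fun h => hlnoth (h hch)⟩
    have hhighss : Chigh ⊂ C :=
      ⟨fun c hc => hc.1, fun h => hhnotl (h hcl)⟩
    obtain ⟨flow, hflowinj, hflowmem⟩ :=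
      (P.pres.2 Clow (hlowss.subset.trans hCE)).1 (hC.indep_of_ssubset hlowss)
    obtain ⟨fhigh, hfhighinj, hfhighmem⟩ :=
      (P.pres.2 Chigh (hhighss.subset.trans hCE)).1 (hC.indep_of_ssubset hhighss)
    have hIndC : M.Indep C := by
      apply (P.pres.2 C hCE).2
      set fg : α → Fin r := fun y => if pos y < P.a i then flow y else fhigh y with hfg
      have hfval1 : ∀ y, pos y < P.a i → fg y = flow y := fun y h => if_pos h
      have hfval2 : ∀ y, ¬ pos y < P.a i → fg y = fhigh y := fun y h => if_neg h
      refine ⟨fg, ?_, ?_⟩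
      · intro y hy z hz hyz
        by_cases h1 : pos y < P.a i <;> by_cases h2 : pos z < P.a i
        · rw [hfval1 y h1, hfval1 z h2] at hyz
          exact hflowinj ⟨hy, h1⟩ ⟨hz, h2⟩ hyz
        · rw [hfval1 y h1, hfval2 z h2] at hyz
          have hzhigh : P.b i < pos z := (hCpos z hz).resolve_left h2
          have hd1 := hdecode y (flow y) (hCE hy) (hflowmem y ⟨hy, h1⟩)
          have hd2 := hdecode z (fhigh z) (hCE hz) (hfhighmem z ⟨hz, hzhigh⟩)
          have hlt1 : P.a (flow y) < P.a i := lt_of_le_of_lt hd1.1 h1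
          have hlt2 : P.b i < P.b (fhigh z) := lt_of_lt_of_le hzhigh hd2.2
          have ha1 : flow y < i := P.ha.lt_iff_lt.1 hlt1
          have ha2 : i < fhigh z := P.hb.lt_iff_lt.1 hlt2
          rw [hyz] at ha1
          exact absurd (lt_trans ha2 ha1) (lt_irrefl _)
        · rw [hfval2 y h1, hfval1 z h2] at hyz
          have hyhigh : P.b i < pos y := (hCpos y hy).resolve_left h1
          have hd1 := hdecode z (flow z) (hCE hz) (hflowmem z ⟨hz, h2⟩)
          have hd2 := hdecode y (fhigh y) (hCE hy) (hfhighmem y ⟨hy, hyhigh⟩)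
          have hlt1 : P.a (flow z) < P.a i := lt_of_le_of_lt hd1.1 h2
          have hlt2 : P.b i < P.b (fhigh y) := lt_of_lt_of_le hyhigh hd2.2
          have ha1 : flow z < i := P.ha.lt_iff_lt.1 hlt1
          have ha2 : i < fhigh y := P.hb.lt_iff_lt.1 hlt2
          rw [hyz] at ha2
          exact absurd (lt_trans ha2 ha1) (lt_irrefl _)
        · rw [hfval2 y h1, hfval2 z h2] at hyz
          have hyhigh : P.b i < pos y := (hCpos y hy).resolve_left h1
          have hzhigh : P.b i < pos z := (hCpos z hz).resolve_left h2
          exact hfhighinj ⟨hy, hyhigh⟩ ⟨hz, hzhigh⟩ hyz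
      · intro y hy
        by_cases h1 : pos y < P.a i
        · rw [hfval1 y h1]
          exact hflowmem y ⟨hy, h1⟩
        · rw [hfval2 y h1]
          exact hfhighmem y ⟨hy, (hCpos y hy).resolve_left h1⟩
    exact hC.1.1 hIndC
  -- (S2): the set of intervals meeting C has size < |C|
  set CF : Finset α := hCfin.toFinset with hCF
  have hmemCF : ∀ y, y ∈ CF ↔ y ∈ C := fun y => Set.Finite.mem_toFinset hCfin
  set NC : Finset (Fin r) :=
    Finset.univ.filter (fun i => ((P.e '' Set.Icc (P.a i) (P.b i)) ∩ C).Nonempty) with hNC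
  set t : {y // y ∈ CF} → Finset (Fin r) :=
    fun c => Finset.univ.filter (fun i => (c : α) ∈ P.e '' Set.Icc (P.a i) (P.b i)) with ht
  have hS2 : NC.card < CF.card := by
    by_cases hall : ∀ s : Finset {y // y ∈ CF}, s.card ≤ (s.biUnion t).card
    · exfalso
      obtain ⟨f, hfinj, hfmem⟩ := (Finset.all_card_le_biUnion_card_iff_exists_injective t).1 hall
      have hlCF : P.e jl ∈ CF := (hmemCF _).2 hcl
      have hIndC : M.Indep C := by
        apply (P.pres.2 C hCE).2
        set fg : α → Fin r := fun y => if h : y ∈ CF then f ⟨y, h⟩ else f ⟨P.e jl, hlCF⟩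
          with hfg
        have hfval : ∀ y (h : y ∈ CF), fg y = f ⟨y, h⟩ := fun y h => dif_pos h
        refine ⟨fg, ?_, ?_⟩
        · intro y hy z hz hyz
          have hy' : y ∈ CF := (hmemCF _).2 hy
          have hz' : z ∈ CF := (hmemCF _).2 hz
          rw [hfval y hy', hfval z hz'] at hyz
          have := hfinj hyz
          exact congrArg Subtype.val this
        · intro y hy
          have hy' : y ∈ CF := (hmemCF _).2 hy
          rw [hfval y hy']
          have := hfmem ⟨y, hy'⟩
          rw [ht] at this
          exact (Finset.mem_filter.1 this).2
      exact hC.1.1 hIndC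
    · push_neg at hall
      obtain ⟨s, hs⟩ := hall
      set A : Finset α := s.image Subtype.val with hA
      have hAcard : A.card = s.card := Finset.card_image_of_injective _ Subtype.val_injective
      have hAC : (A : Set α) ⊆ C := by
        intro y hy
        rw [hA] at hy
        simp only [Finset.coe_image, Set.mem_image] at hy
        obtain ⟨c, -, rfl⟩ := hy
        exact (hmemCF _).1 c.2
      have hAeq : (A : Set α) = C := by
        by_contra hne
        have hss : (A : Set α) ⊂ C := ⟨hAC, fun h => hne (subset_antisymm hAC h)⟩
        obtain ⟨g, hginj, hgmem⟩ :=
          (P.pres.2 _ (hAC.trans hCE)).1 (hC.indep_of_ssubset hss)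
        have himcard : (s.image (fun c : {y // y ∈ CF} => g c.val)).card = s.card := by
          apply Finset.card_image_of_injOn
          intro u hu v hv huv
          have hu' : (u : α) ∈ (A : Set α) := by
            rw [hA]; simp only [Finset.coe_image, Set.mem_image]; exact ⟨u, hu, rfl⟩
          have hv' : (v : α) ∈ (A : Set α) := by
            rw [hA]; simp only [Finset.coe_image, Set.mem_image]; exact ⟨v, hv, rfl⟩
          have := hginj hu' hv' huv
          exact Subtype.ext this
        have himsub : s.image (fun c : {y // y ∈ CF} => g c.val) ⊆ s.biUnion t := by
          intro i hi
          rw [Finset.mem_image] at hi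
          obtain ⟨c, hc, rfl⟩ := hi
          apply Finset.mem_biUnion.2
          refine ⟨c, hc, ?_⟩
          rw [ht]
          apply Finset.mem_filter.2
          refine ⟨Finset.mem_univ _, ?_⟩
          apply hgmem
          rw [hA]; simp only [Finset.coe_image, Set.mem_image]; exact ⟨c, hc, rfl⟩
        have := Finset.card_le_card himsub
        omega
      have hACF : A = CF := by
        apply Finset.coe_injective
        rw [hAeq, hCF, Set.Finite.coe_toFinset]
      have hNCsub : NC ⊆ s.biUnion t := by
        intro i hi
        rw [hNC, Finset.mem_filter] at hi
        obtain ⟨y, hyJ, hyC⟩ := hi.2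
        have hyA : y ∈ A := by rw [hACF]; exact (hmemCF _).2 hyC
        rw [hA, Finset.mem_image] at hyA
        obtain ⟨c, hc, rfl⟩ := hyA
        apply Finset.mem_biUnion.2
        refine ⟨c, hc, ?_⟩
        rw [ht]
        exact Finset.mem_filter.2 ⟨Finset.mem_univ _, hyJ⟩
      have h1 := Finset.card_le_card hNCsub
      have h2 : s.card = CF.card := by rw [← hAcard, hACF]
      omega
  -- (S3): conclude
  set B : Set α := insert (P.e jq) (C \ {w}) with hB
  have hBE : B ⊆ M.E := by
    rw [hB]
    exact Set.insert_subset hqE ((Set.diff_subset).trans hCE)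
  by_contra hnodep
  have hBind : M.Indep B := by
    rcases M.indep_or_dep hBE with h | h
    · exact h
    · exact absurd h hnodep
  obtain ⟨g, hginj, hgmem⟩ := (P.pres.2 B hBE).1 hBind
  set BF : Finset α := insert (P.e jq) (CF.erase w) with hBF
  have hmemBF : ∀ y, y ∈ BF ↔ y ∈ B := by
    intro y
    rw [hBF, hB, Finset.mem_insert, Finset.mem_erase, Set.mem_insert_iff, Set.mem_diff,
      Set.mem_singleton_iff, hmemCF]
    tauto
  have hBFcard : BF.card = CF.card := by
    rw [hBF]
    have hqnot : P.e jq ∉ CF.erase w := by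
      intro h
      exact hq ((hmemCF _).1 (Finset.mem_of_mem_erase h))
    rw [Finset.card_insert_of_notMem hqnot, Finset.card_erase_of_mem ((hmemCF _).2 hw)]
    have : 0 < CF.card := Finset.card_pos.2 ⟨w, (hmemCF _).2 hw⟩
    omega
  have hVsub : BF.image g ⊆ NC := by
    intro i hi
    rw [Finset.mem_image] at hi
    obtain ⟨y, hy, rfl⟩ := hi
    have hyB : y ∈ B := (hmemBF _).1 hy
    rw [hNC, Finset.mem_filter]
    refine ⟨Finset.mem_univ _, ?_⟩
    rcases ((hmemBF _).1 hy : y ∈ B) with h | h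
    · subst h
      exact hS1 _ (hgmem _ hyB)
    · exact ⟨y, hgmem _ hyB, h.1⟩
  have hVcard : (BF.image g).card = BF.card := by
    apply Finset.card_image_of_injOn
    intro u hu v hv huv
    exact hginj ((hmemBF _).1 hu) ((hmemBF _).1 hv) huv
  have := Finset.card_le_card hVsub
  omega

end Interior
section PC

variable {α : Type*} {M : Matroid α} {S T : Set α} {x : α}

lemma IsParallelConnOf.swap {N M₁ M₂ : Matroid α} {y : α} (h : IsParallelConnOf N M₁ M₂ y) :
    IsParallelConnOf N M₂ M₁ y := by
  obtain ⟨h1, h2, h3, h4⟩ := h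
  refine ⟨by rw [Set.inter_comm]; exact h1, fun hh => h2 ⟨hh.2, hh.1⟩,
    by rw [Set.union_comm]; exact h3, fun B => ?_⟩
  rw [h4 B]
  tauto

lemma pc_xS (hST : S ∩ T = {x}) : x ∈ S := by
  have : x ∈ S ∩ T := by rw [hST]; rfl
  exact this.1

lemma pc_xT (hST : S ∩ T = {x}) : x ∈ T := by
  have : x ∈ S ∩ T := by rw [hST]; rfl
  exact this.2

lemma pc_ground (hpc : IsParallelConnOf M (M ↾ S) (M ↾ T) x) : M.E = S ∪ T := hpc.2.2.1

/-- In a connected matroid with at least two elements, there are no loops. -/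
lemma conn_nonloop (hc : M.IsConnected) {z : α} (hz : z ∈ M.E) {w : α} (hw : w ∈ M.E)
    (hzw : z ≠ w) : ∀ y ∈ M.E, M.Indep {y} := by
  intro y hy
  by_contra hnind
  have hyDep : M.Dep {y} := ⟨hnind, Set.singleton_subset_iff.2 hy⟩
  obtain ⟨u, hu, hyu⟩ : ∃ u ∈ M.E, y ≠ u := by
    by_cases h : y = z
    · exact ⟨w, hw, h ▸ hzw⟩
    · exact ⟨z, hz, h⟩
  rcases hc.2 hy hu with ⟨heq, -⟩ | ⟨C, hC, hyC, huC⟩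
  · exact hyu heq
  · have := hC.2 {y} hyDep (Set.singleton_subset_iff.2 hyC)
    rw [← this] at huC
    exact hyu huC.symm

lemma pc_xq_indep (hfin : M.E.Finite) (hc : M.IsConnected) (hS : S ⊂ M.E)
    (hST : S ∩ T = {x})
    (h2c : ¬ ∃ C, M.IsCircuit' C ∧ x ∈ C ∧ C.ncard = 2)
    (hnl : ∀ y ∈ M.E, M.Indep {y}) :
    ∀ q ∈ M.E, q ≠ x → M.Indep {x, q} := by
  intro q hq hqx
  have hxE : x ∈ M.E := hS.subset (pc_xS hST)
  by_contra hnind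
  have hdep : M.Dep {x, q} := ⟨hnind, Set.insert_subset hxE (Set.singleton_subset_iff.2 hq)⟩
  obtain ⟨C₀, hC₀sub, hC₀⟩ := Matroid.exists_isCircuit_subset hfin hdep
  by_cases hx0 : x ∈ C₀ <;> by_cases hq0 : q ∈ C₀
  · have hC₀eq : C₀ = {x, q} :=
      subset_antisymm hC₀sub (Set.insert_subset hx0 (Set.singleton_subset_iff.2 hq0))
    apply h2c
    refine ⟨C₀, hC₀, hx0, ?_⟩
    rw [hC₀eq]
    exact Set.ncard_pair (fun h => hqx h.symm)
  · have : C₀ = {x} := by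
      apply subset_antisymm
      · intro c hc'
        rcases hC₀sub hc' with h | h
        · exact h
        · exact absurd (h ▸ hc') hq0
      · exact Set.singleton_subset_iff.2 hx0
    rw [this] at hC₀
    exact hC₀.1.1 (hnl x hxE)
  · have : C₀ = {q} := by
      apply subset_antisymm
      · intro c hc'
        rcases hC₀sub hc' with h | h
        · exact absurd (h ▸ hc') hx0
        · exact h
      · exact Set.singleton_subset_iff.2 hq0
    rw [this] at hC₀
    exact hC₀.1.1 (hnl q hq)
  · have : C₀ = ∅ := by
      rw [Set.eq_empty_iff_forall_notMem]
      intro c hc'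
      rcases hC₀sub hc' with h | h
      · exact hx0 (h ▸ hc')
      · exact hq0 (h ▸ hc')
    rw [this] at hC₀
    exact hC₀.1.1 M.empty_indep

lemma pc_base_union (hpc : IsParallelConnOf M (M ↾ S) (M ↾ T) x) (hST : S ∩ T = {x})
    {B₁ B₂ : Set α} (hB₁ : (M ↾ S).IsBase B₁) (hB₂ : (M ↾ T).IsBase B₂)
    (hx₁ : x ∈ B₁) (hx₂ : x ∈ B₂) : M.IsBase (B₁ ∪ B₂) := by
  have hB₁S : B₁ ⊆ S := hB₁.subset_ground
  have hB₂T : B₂ ⊆ T := hB₂.subset_ground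
  apply (hpc.2.2.2 _).2
  left
  have h1 : (B₁ ∪ B₂) ∩ (M ↾ S).E = B₁ := by
    rw [Matroid.restrict_ground_eq]
    apply subset_antisymm
    · rintro y ⟨hyu, hyS⟩
      rcases hyu with h | h
      · exact h
      · have : y ∈ S ∩ T := ⟨hyS, hB₂T h⟩
        rw [hST] at this
        exact this ▸ hx₁
    · intro y hy
      exact ⟨Or.inl hy, hB₁S hy⟩
  have h2 : (B₁ ∪ B₂) ∩ (M ↾ T).E = B₂ := by
    rw [Matroid.restrict_ground_eq]
    apply subset_antisymm
    · rintro y ⟨hyu, hyT⟩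
      rcases hyu with h | h
      · have : y ∈ S ∩ T := ⟨hB₁S h, hyT⟩
        rw [hST] at this
        exact this ▸ hx₂
      · exact h
    · intro y hy
      exact ⟨Or.inr hy, hB₂T hy⟩
  rw [h1, h2]
  exact ⟨Or.inl hx₁, hB₁, hB₂⟩

lemma pc_base_union2 (hpc : IsParallelConnOf M (M ↾ S) (M ↾ T) x) (hST : S ∩ T = {x})
    {B₁ B₂ : Set α} (hB₁ : (M ↾ S).IsBase B₁) (hx₁ : x ∉ B₁) (hB₂ : (M ↾ T).IsBase B₂)
    (hx₂ : x ∈ B₂) : M.IsBase (B₁ ∪ (B₂ \ {x})) := by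
  have hB₁S : B₁ ⊆ S := hB₁.subset_ground
  have hB₂T : B₂ ⊆ T := hB₂.subset_ground
  apply (hpc.2.2.2 _).2
  right
  have hxn : x ∉ B₁ ∪ (B₂ \ {x}) := by
    rintro (h | h)
    · exact hx₁ h
    · exact h.2 rfl
  have h1 : (B₁ ∪ (B₂ \ {x})) ∩ (M ↾ S).E = B₁ := by
    rw [Matroid.restrict_ground_eq]
    apply subset_antisymm
    · rintro y ⟨hyu, hyS⟩
      rcases hyu with h | h
      · exact h
      · have : y ∈ S ∩ T := ⟨hyS, hB₂T h.1⟩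
        rw [hST] at this
        exact absurd this h.2
    · intro y hy
      exact ⟨Or.inl hy, hB₁S hy⟩
  have h2 : ((B₁ ∪ (B₂ \ {x})) ∩ (M ↾ T).E) ∪ {x} = B₂ := by
    rw [Matroid.restrict_ground_eq]
    apply subset_antisymm
    · rintro y (⟨hyu, hyT⟩ | hy)
      · rcases hyu with h | h
        · have : y ∈ S ∩ T := ⟨hB₁S h, hyT⟩
          rw [hST] at this
          exact absurd (this ▸ h) hx₁
        · exact h.1
      · exact hy ▸ hx₂
    · intro y hy
      by_cases hyx : y = x
      · exact Or.inr hyx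
      · exact Or.inl ⟨Or.inr ⟨hy, hyx⟩, hB₂T hy⟩
  rw [h1, h2]
  exact ⟨hxn, Or.inl ⟨hB₁, hB₂⟩⟩

lemma pc_indep_union (hpc : IsParallelConnOf M (M ↾ S) (M ↾ T) x) (hST : S ∩ T = {x})
    {I₁ I₂ : Set α} (hI₁ : M.Indep I₁) (h1S : I₁ ⊆ S) (hx1 : x ∈ I₁)
    (hI₂ : M.Indep I₂) (h2T : I₂ ⊆ T) (hx2 : x ∈ I₂) : M.Indep (I₁ ∪ I₂) := by
  obtain ⟨B₁, hB₁, hsub₁⟩ :=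
    (Matroid.restrict_indep_iff.2 ⟨hI₁, h1S⟩ : (M ↾ S).Indep I₁).exists_isBase_superset
  obtain ⟨B₂, hB₂, hsub₂⟩ :=
    (Matroid.restrict_indep_iff.2 ⟨hI₂, h2T⟩ : (M ↾ T).Indep I₂).exists_isBase_superset
  exact (pc_base_union hpc hST hB₁ hB₂ (hsub₁ hx1) (hsub₂ hx2)).indep.subset
    (Set.union_subset_union hsub₁ hsub₂)

lemma pc_indep_of (hpc : IsParallelConnOf M (M ↾ S) (M ↾ T) x) (hST : S ∩ T = {x})
    {I : Set α} (hI1 : M.Indep (I ∩ S)) (hI2 : M.Indep ((I ∩ T) ∪ {x}))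
    (hIE : I ⊆ M.E) (hxI : x ∉ I) : M.Indep I := by
  have hEST : M.E = S ∪ T := pc_ground hpc
  obtain ⟨B₂, hB₂, hsub₂⟩ :=
    (Matroid.restrict_indep_iff.2 ⟨hI2, Set.union_subset
      (Set.inter_subset_right) (Set.singleton_subset_iff.2 (pc_xT hST))⟩ :
      (M ↾ T).Indep ((I ∩ T) ∪ {x})).exists_isBase_superset
  have hx₂ : x ∈ B₂ := hsub₂ (Or.inr rfl)
  obtain ⟨B₁, hB₁, hsub₁⟩ :=
    (Matroid.restrict_indep_iff.2 ⟨hI1, Set.inter_subset_right⟩ :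
      (M ↾ S).Indep (I ∩ S)).exists_isBase_superset
  have hIsub : ∀ y ∈ I, y ∈ S → y ∈ B₁ := fun y hy hyS => hsub₁ ⟨hy, hyS⟩
  have hIsubT : ∀ y ∈ I, y ∈ T → y ∈ B₂ := fun y hy hyT => hsub₂ (Or.inl ⟨hy, hyT⟩)
  by_cases hxB₁ : x ∈ B₁
  · apply (pc_base_union hpc hST hB₁ hB₂ hxB₁ hx₂).indep.subset
    intro y hy
    rcases (hEST ▸ hIE hy : y ∈ S ∪ T) with h | h
    · exact Or.inl (hIsub y hy h)
    · exact Or.inr (hIsubT y hy h)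
  · apply (pc_base_union2 hpc hST hB₁ hxB₁ hB₂ hx₂).indep.subset
    intro y hy
    rcases (hEST ▸ hIE hy : y ∈ S ∪ T) with h | h
    · exact Or.inl (hIsub y hy h)
    · exact Or.inr ⟨hIsubT y hy h, fun hyx => hxI (hyx ▸ hy)⟩

lemma pc_indep_fwd (hpc : IsParallelConnOf M (M ↾ S) (M ↾ T) x) (hST : S ∩ T = {x})
    {I : Set α} (hI : M.Indep I) (hxI : x ∉ I) :
    M.Indep ((I ∩ S) ∪ {x}) ∨ M.Indep ((I ∩ T) ∪ {x}) := by
  obtain ⟨B, hB, hIB⟩ := hI.exists_isBase_superset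
  rcases (hpc.2.2.2 B).1 hB with ⟨hxB, h1, h2⟩ | ⟨hxB, hcase⟩
  · left
    have hsub : (I ∩ S) ∪ {x} ⊆ B ∩ (M ↾ S).E := by
      rw [Matroid.restrict_ground_eq]
      rintro y (⟨hyI, hyS⟩ | hy)
      · exact ⟨hIB hyI, hyS⟩
      · have : y = x := hy
        rw [this]
        exact ⟨hxB, pc_xS hST⟩
    exact ((Matroid.restrict_indep_iff.1 (h1.indep.subset hsub)).1)
  · rcases hcase with ⟨h1, h2⟩ | ⟨h1, h2⟩
    · right
      have hsub : (I ∩ T) ∪ {x} ⊆ (B ∩ (M ↾ T).E) ∪ {x} := by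
        rintro y (⟨hyI, hyT⟩ | hy)
        · exact Or.inl ⟨hIB hyI, hyT⟩
        · exact Or.inr hy
      exact ((Matroid.restrict_indep_iff.1 (h2.indep.subset hsub)).1)
    · left
      have hsub : (I ∩ S) ∪ {x} ⊆ (B ∩ (M ↾ S).E) ∪ {x} := by
        rintro y (⟨hyI, hyS⟩ | hy)
        · exact Or.inl ⟨hIB hyI, hyS⟩
        · exact Or.inr hy
      exact ((Matroid.restrict_indep_iff.1 (h2.indep.subset hsub)).1)

end PC
section PC2

variable {α : Type*} {M : Matroid α} {S T : Set α} {x : α}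

lemma circuit_restrict_of_subset {C : Set α} (hSE : S ⊆ M.E) (hC : M.IsCircuit' C)
    (hsub : C ⊆ S) : (M ↾ S).IsCircuit' C := by
  refine ⟨Matroid.restrict_dep_iff.2 ⟨hC.1.1, hsub⟩, fun D hD hDsub => ?_⟩
  have := Matroid.restrict_dep_iff.1 hD
  exact hC.2 D ⟨this.1, this.2.trans hSE⟩ hDsub

lemma circuit_of_restrict {C : Set α} (hSE : S ⊆ M.E) (hC : (M ↾ S).IsCircuit' C) :
    M.IsCircuit' C ∧ C ⊆ S := by
  have h1 := Matroid.restrict_dep_iff.1 hC.1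
  refine ⟨⟨⟨h1.1, h1.2.trans hSE⟩, fun D hD hDsub => ?_⟩, h1.2⟩
  exact hC.2 D (Matroid.restrict_dep_iff.2 ⟨hD.1, hDsub.trans h1.2⟩) hDsub

lemma pc_crossing_circuit (hpc : IsParallelConnOf M (M ↾ S) (M ↾ T) x)
    (hST : S ∩ T = {x})
    {C : Set α} {y z : α} (hCcirc : M.IsCircuit' C) (hyC : y ∈ C) (hyS : y ∈ S)
    (hzC : z ∈ C) (hzS : z ∈ S) (hyz : y ≠ z) (hCS : ¬ C ⊆ S) :
    ∃ C₁, M.IsCircuit' C₁ ∧ C₁ ⊆ S ∧ y ∈ C₁ ∧ z ∈ C₁ := by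
  have hCE : C ⊆ M.E := hCcirc.1.subset_ground
  have hEST : M.E = S ∪ T := pc_ground hpc
  have hswap : IsParallelConnOf M (M ↾ T) (M ↾ S) x := hpc.swap
  have hTS : T ∩ S = {x} := by rw [Set.inter_comm]; exact hST
  have hxS : x ∈ S := pc_xS hST
  have hxT : x ∈ T := pc_xT hST
  -- some element of C ∩ S other than x
  obtain ⟨y₀, hy₀C, hy₀S, hy₀x⟩ : ∃ y₀, y₀ ∈ C ∧ y₀ ∈ S ∧ y₀ ≠ x := by
    by_cases h : y = x
    · exact ⟨z, hzC, hzS, fun hzx => hyz (h.trans hzx.symm)⟩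
    · exact ⟨y, hyC, hyS, h⟩
  have hy₀T : y₀ ∉ T := by
    intro h
    have : y₀ ∈ S ∩ T := ⟨hy₀S, h⟩
    rw [hST] at this
    exact hy₀x this
  have hCT : ¬ C ⊆ T := fun h => hy₀T (h hy₀C)
  -- (g1) x ∉ C
  have hxC : x ∉ C := by
    intro hxC
    by_cases hs : M.Indep (C ∩ S)
    · by_cases ht : M.Indep (C ∩ T)
      · have hind : M.Indep C := by
          have := pc_indep_union hpc hST hs Set.inter_subset_right ⟨hxC, hxS⟩
            ht Set.inter_subset_right ⟨hxC, hxT⟩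
          have heq : (C ∩ S) ∪ (C ∩ T) = C := by
            rw [← Set.inter_union_distrib_left]
            exact Set.inter_eq_self_of_subset_left (hEST ▸ hCE)
          rwa [heq] at this
        exact hCcirc.1.1 hind
      · have := hCcirc.2 (C ∩ T) ⟨ht, Set.inter_subset_left.trans hCE⟩ Set.inter_subset_left
        exact hCT (by rw [← this]; exact Set.inter_subset_right)
    · have := hCcirc.2 (C ∩ S) ⟨hs, Set.inter_subset_left.trans hCE⟩ Set.inter_subset_left
      exact hCS (by rw [← this]; exact Set.inter_subset_right)
  -- (g2)
  have hCSss : C ∩ S ⊂ C := Set.ssubset_iff_subset_ne.2 ⟨Set.inter_subset_left,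
    fun h => hCS (h ▸ Set.inter_subset_right)⟩
  have hCTss : C ∩ T ⊂ C := Set.ssubset_iff_subset_ne.2 ⟨Set.inter_subset_left,
    fun h => hCT (h ▸ Set.inter_subset_right)⟩
  have hCSind : M.Indep (C ∩ S) := hCcirc.indep_of_ssubset hCSss
  have hCTind : M.Indep (C ∩ T) := hCcirc.indep_of_ssubset hCTss
  -- (g3)
  have hdepT : ¬ M.Indep ((C ∩ T) ∪ {x}) := by
    intro hind
    exact hCcirc.1.1 (pc_indep_of hpc hST hCSind hind hCE hxC)
  have hdepS : ¬ M.Indep ((C ∩ S) ∪ {x}) := by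
    intro hind
    apply hCcirc.1.1
    apply pc_indep_of hswap hTS hCTind hind hCE hxC
  -- (g4): C₁ := (C ∩ S) ∪ {x} is a circuit
  set C₁ : Set α := (C ∩ S) ∪ {x} with hC₁
  have hC₁S : C₁ ⊆ S := Set.union_subset Set.inter_subset_right
    (Set.singleton_subset_iff.2 hxS)
  have hC₁E : C₁ ⊆ M.E := hC₁S.trans (hEST ▸ Set.subset_union_left)
  refine ⟨C₁, ⟨⟨hdepS, hC₁E⟩, ?_⟩, hC₁S, Or.inl ⟨hyC, hyS⟩, Or.inl ⟨hzC, hzS⟩⟩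
  intro D hD hDsub
  by_contra hne
  obtain ⟨y₁, hy₁C₁, hy₁D⟩ := Set.exists_of_ssubset
    (Set.ssubset_iff_subset_ne.2 ⟨hDsub, hne⟩)
  by_cases hxD : x ∈ D
  · -- y₁ ≠ x, y₁ ∈ C ∩ S
    have hy₁x : y₁ ≠ x := fun h => hy₁D (h ▸ hxD)
    have hy₁CS : y₁ ∈ C ∩ S := by
      rcases hy₁C₁ with h | h
      · exact h
      · exact absurd h hy₁x
    set Z : Set α := C \ {y₁} with hZ
    have hZss : Z ⊂ C := ⟨Set.diff_subset, fun hsup => (hsup hy₁CS.1).2 rfl⟩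
    have hZind : M.Indep Z := hCcirc.indep_of_ssubset hZss
    have hxZ : x ∉ Z := fun h => hxC h.1
    have hZT : Z ∩ T = C ∩ T := by
      apply subset_antisymm
      · exact Set.inter_subset_inter_left _ Set.diff_subset
      · rintro c ⟨hcC, hcT⟩
        refine ⟨⟨hcC, ?_⟩, hcT⟩
        intro hcy
        rw [Set.mem_singleton_iff] at hcy
        subst hcy
        have : c ∈ S ∩ T := ⟨hy₁CS.2, hcT⟩
        rw [hST] at this
        exact hy₁x this
    rcases pc_indep_fwd hpc hST hZind hxZ with h | h
    · -- (Z ∩ S) ∪ {x} ⊇ D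
      have hDind : M.Indep D := by
        apply h.subset
        intro c hcD
        rcases hDsub hcD with hc | hc
        · left
          refine ⟨⟨hc.1, ?_⟩, hc.2⟩
          intro hcy
          rw [Set.mem_singleton_iff] at hcy
          exact hy₁D (hcy ▸ hcD)
        · exact Or.inr hc
      exact hD.1 hDind
    · rw [hZT] at h
      exact hdepT h
  · -- x ∉ D means D ⊆ C ∩ S, so D is independent
    have hDsub' : D ⊆ C ∩ S := by
      intro c hcD
      rcases hDsub hcD with hc | hc
      · exact hc
      · exact absurd (hc ▸ hcD) hxD
    exact hD.1 (hCSind.subset hDsub')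

lemma pc_conn (hpc : IsParallelConnOf M (M ↾ S) (M ↾ T) x) (hST : S ∩ T = {x})
    (hSE : S ⊆ M.E) (hc : M.IsConnected) : (M ↾ S).IsConnected := by
  refine ⟨⟨x, pc_xS hST⟩, fun y z hy hz => ?_⟩
  have hyS : y ∈ S := hy
  have hzS : z ∈ S := hz
  by_cases hyz : y = z
  · exact Or.inl ⟨hyz, hy⟩
  rcases hc.2 (hSE hyS) (hSE hzS) with ⟨heq, -⟩ | ⟨C, hC, hyC, hzC⟩
  · exact absurd heq hyz
  by_cases hsub : C ⊆ S
  · exact Or.inr ⟨C, circuit_restrict_of_subset hSE hC hsub, hyC, hzC⟩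
  · obtain ⟨C₁, hC₁, hC₁S, hyC₁, hzC₁⟩ :=
      pc_crossing_circuit hpc hST hC hyC hyS hzC hzS hyz hsub
    exact Or.inr ⟨C₁, circuit_restrict_of_subset hSE hC₁ hC₁S, hyC₁, hzC₁⟩

lemma pc_notcl (hpc : IsParallelConnOf M (M ↾ S) (M ↾ T) x) (hST : S ∩ T = {x})
    (hSE : S ⊆ M.E) (hTE : T ⊆ M.E)
    (hnl : ∀ y ∈ M.E, M.Indep {y})
    (hxq : ∀ q ∈ M.E, q ≠ x → M.Indep {x, q})
    {A : Set α} (hAS : A ⊆ S) (hA : M.Indep A) {q : α} (hqT : q ∈ T) (hqx : q ≠ x)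
    (hqS : q ∉ S) (hdep : M.Dep (insert q A)) : False := by
  have hxS : x ∈ S := pc_xS hST
  have hxT : x ∈ T := pc_xT hST
  have hxqind : M.Indep {x, q} := hxq q (hTE hqT) hqx
  obtain ⟨B₁, hB₁, hsub₁⟩ :=
    (Matroid.restrict_indep_iff.2 ⟨hnl x (hSE hxS), Set.singleton_subset_iff.2 hxS⟩ :
      (M ↾ S).Indep {x}).exists_isBase_superset
  obtain ⟨B₂, hB₂, hsub₂⟩ :=
    (Matroid.restrict_indep_iff.2 ⟨hxqind, Set.insert_subset hxT
      (Set.singleton_subset_iff.2 hqT)⟩ : (M ↾ T).Indep {x, q}).exists_isBase_superset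
  have hx₁ : x ∈ B₁ := hsub₁ rfl
  have hx₂ : x ∈ B₂ := hsub₂ (Or.inl rfl)
  have hq₂ : q ∈ B₂ := hsub₂ (Or.inr rfl)
  have hbase := pc_base_union hpc hST hB₁ hB₂ hx₁ hx₂
  have hqB₁ind : M.Indep (insert q B₁) := hbase.indep.subset
    (Set.insert_subset (Or.inr hq₂) Set.subset_union_left)
  have hbasis : M.IsBasis B₁ S := (Matroid.isBase_restrict_iff hSE).1 hB₁
  have hqclA : q ∈ M.closure A := (hA.mem_closure_iff).2 (Or.inl hdep)
  have hqclB : q ∈ M.closure B₁ := by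
    rw [hbasis.closure_eq_closure]
    exact M.closure_subset_closure hAS hqclA
  rcases (hbasis.indep.mem_closure_iff).1 hqclB with h | h
  · exact h.1 hqB₁ind
  · exact hqS (hB₁.subset_ground h)

end PC2
section Final

variable {α : Type*} {M : Matroid α} {S T : Set α} {x : α}

lemma pc_convex {n r : ℕ} (P : IntervalPres M n r)
    (hpc : IsParallelConnOf M (M ↾ S) (M ↾ T) x) (hST : S ∩ T = {x})
    (hSE : S ⊆ M.E) (hTE : T ⊆ M.E) (hc : M.IsConnected)
    (hnl : ∀ y ∈ M.E, M.Indep {y}) (hxqi : ∀ q ∈ M.E, q ≠ x → M.Indep {x, q})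
    {jp jj jk : Fin n} (h1 : jp < jj) (h2 : jj < jk)
    (hp : P.e jp ∈ S) (hk : P.e jk ∈ S) (hj : P.e jj ∉ S) : False := by
  have hEST := pc_ground hpc
  have hqE : P.e jj ∈ M.E := by rw [← P.ground]; exact ⟨jj, rfl⟩
  have hqT : P.e jj ∈ T := by
    rcases (hEST ▸ hqE : P.e jj ∈ S ∪ T) with h | h
    · exact absurd h hj
    · exact h
  have hqx : P.e jj ≠ x := fun h => hj (h ▸ pc_xS hST)
  have hpk : P.e jp ≠ P.e jk := fun h => absurd (P.inj h) (h1.trans h2).ne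
  rcases (pc_conn hpc hST hSE hc).2 (show P.e jp ∈ (M ↾ S).E from hp)
      (show P.e jk ∈ (M ↾ S).E from hk) with ⟨heq, -⟩ | ⟨Cs, hCs, hpC, hkC⟩
  · exact hpk heq
  obtain ⟨hCcirc, hCsub⟩ := circuit_of_restrict hSE hCs
  have hqC : P.e jj ∉ Cs := fun h => hj (hCsub h)
  have hdep := P.interior_dep hCcirc hqC hpC hkC h1 h2 hpC
  have hAss : Cs \ {P.e jp} ⊂ Cs := ⟨Set.diff_subset, fun hsup => (hsup hpC).2 rfl⟩
  exact pc_notcl hpc hST hSE hTE hnl hxqi (Set.diff_subset.trans hCsub)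
    (hCcirc.indep_of_ssubset hAss) hqT hqx hj hdep

lemma main_aux {n r : ℕ} (P : IntervalPres M n r) (hc : M.IsConnected)
    {S₁ S₂ : Set α} (h₁ : S₁ ⊂ M.E) (h₂ : S₂ ⊂ M.E)
    (hx : S₁ ∩ S₂ = {x}) (hpc : IsParallelConnOf M (M ↾ S₁) (M ↾ S₂) x)
    (h2c : ¬ ∃ C, M.IsCircuit' C ∧ x ∈ C ∧ C.ncard = 2)
    (hn : 0 < n) (h0 : P.e ⟨0, hn⟩ ∈ S₁) :
    IsTerminal (M ↾ S₁) x ∧ IsTerminal (M ↾ S₂) x := by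
  have hSE : S₁ ⊆ M.E := h₁.subset
  have hTE : S₂ ⊆ M.E := h₂.subset
  have hxS : x ∈ S₁ := pc_xS hx
  have hxT : x ∈ S₂ := pc_xT hx
  have hxE : x ∈ M.E := hSE hxS
  have hfin : M.E.Finite := P.ground_finite
  obtain ⟨w, hwE, hwS⟩ := Set.exists_of_ssubset h₁
  have hxw : x ≠ w := fun h => hwS (h ▸ hxS)
  have hnl : ∀ y ∈ M.E, M.Indep {y} := conn_nonloop hc hxE hwE hxw
  have hxqi : ∀ q ∈ M.E, q ≠ x → M.Indep {x, q} :=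
    pc_xq_indep hfin hc h₁ hx h2c hnl
  have hTS : S₂ ∩ S₁ = {x} := by rw [Set.inter_comm]; exact hx
  have hswap := hpc.swap
  have hxqi₂ : ∀ q ∈ M.E, q ≠ x → M.Indep {x, q} :=
    pc_xq_indep hfin hc h₂ hTS h2c hnl
  have hEST := pc_ground hpc
  obtain ⟨t, ht⟩ := P.exists_pos hxE
  have hlastlt : n - 1 < n := by omega
  set last : Fin n := ⟨n - 1, hlastlt⟩ with hlast
  have hle_last : ∀ j : Fin n, j ≤ last := by
    intro j
    rw [Fin.le_def]
    have := j.isLt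
    simp only [hlast]
    omega
  -- S₁ contains the initial segment up to t
  have c1 : ∀ j : Fin n, j ≤ t → P.e j ∈ S₁ := by
    intro j hj
    by_contra hjn
    have hne0 : j ≠ ⟨0, hn⟩ := fun h => hjn (h ▸ h0)
    have h0j : (⟨0, hn⟩ : Fin n) < j :=
      lt_of_le_of_ne (Fin.le_def.2 (Nat.zero_le _)) (Ne.symm hne0)
    have hjt : j < t := lt_of_le_of_ne hj (fun h => hjn (by rw [h, ht]; exact hxS))
    exact pc_convex P hpc hx hSE hTE hc hnl hxqi h0j hjt h0 (by rw [ht]; exact hxS) hjn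
  -- the last element is in S₂
  have c2 : P.e last ∈ S₂ := by
    by_contra hlastn
    have hlastE : P.e last ∈ M.E := by rw [← P.ground]; exact ⟨last, rfl⟩
    have hlastS₁ : P.e last ∈ S₁ := by
      rcases (hEST ▸ hlastE : P.e last ∈ S₁ ∪ S₂) with h | h
      · exact h
      · exact absurd h hlastn
    have hall : ∀ j : Fin n, P.e j ∈ S₁ := by
      intro j
      by_contra hjn
      have hne0 : j ≠ ⟨0, hn⟩ := fun h => hjn (h ▸ h0)
      have h0j : (⟨0, hn⟩ : Fin n) < j :=
        lt_of_le_of_ne (Fin.le_def.2 (Nat.zero_le _)) (Ne.symm hne0)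
      have hjl : j < last :=
        lt_of_le_of_ne (hle_last j) (fun h => hjn (h ▸ hlastS₁))
      exact pc_convex P hpc hx hSE hTE hc hnl hxqi h0j hjl h0 hlastS₁ hjn
    have hsub : M.E ⊆ S₁ := by
      intro y hy
      obtain ⟨j, rfl⟩ := P.exists_pos hy
      exact hall j
    exact h₁.ne (subset_antisymm h₁.subset hsub)
  -- S₂ contains the final segment from t on
  have c3 : ∀ j : Fin n, t ≤ j → P.e j ∈ S₂ := by
    intro j hj
    by_contra hjn
    have hjt : t < j := lt_of_le_of_ne hj (fun h => hjn (by rw [← h, ht]; exact hxT))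
    have hjl : j < last := lt_of_le_of_ne (hle_last j) (fun h => hjn (h ▸ c2))
    exact pc_convex P hswap hTS hTE hSE hc hnl hxqi₂ hjt hjl (by rw [ht]; exact hxT) c2 hjn
  -- S₁ is exactly the initial segment
  have c4 : S₁ = P.e '' {j | j ≤ t} := by
    apply subset_antisymm
    · intro y hy
      obtain ⟨j, rfl⟩ := P.exists_pos (hSE hy)
      refine ⟨j, ?_, rfl⟩
      by_contra hjt
      have hjt' : t < j := lt_of_not_ge hjt
      have : P.e j ∈ S₁ ∩ S₂ := ⟨hy, c3 j (le_of_lt hjt')⟩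
      rw [hx] at this
      have : j = t := P.inj (by rw [ht]; exact this)
      exact (ne_of_gt hjt') this
    · rintro y ⟨j, hj, rfl⟩
      exact c1 j hj
  have c5 : S₂ = P.e '' {j | t ≤ j} := by
    apply subset_antisymm
    · intro y hy
      obtain ⟨j, rfl⟩ := P.exists_pos (hTE hy)
      refine ⟨j, ?_, rfl⟩
      by_contra hjt
      have hjt' : j < t := lt_of_not_ge hjt
      have : P.e j ∈ S₁ ∩ S₂ := ⟨c1 j (le_of_lt hjt'), hy⟩
      rw [hx] at this
      have : j = t := P.inj (by rw [ht]; exact this)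
      exact (ne_of_lt hjt') this
    · rintro y ⟨j, hj, rfl⟩
      exact c3 j hj
  constructor
  · have hT₁ := P.isTerminal_restrict_init t (by rw [ht]; exact hnl x hxE)
    rw [← c4, ht] at hT₁
    exact hT₁
  · have c5' : S₂ = P.rev.e '' {j | j ≤ t.rev} := by
      rw [c5]
      ext y
      constructor
      · rintro ⟨j, hj, rfl⟩
        refine ⟨j.rev, ?_, ?_⟩
        · exact Fin.rev_le_rev.2 hj
        · rw [P.rev_e, Fin.rev_rev]
      · rintro ⟨j, hj, rfl⟩
        refine ⟨j.rev, ?_, ?_⟩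
        · rw [← Fin.rev_rev t]
          exact Fin.rev_le_rev.2 hj
        · rw [P.rev_e]
    have hT₂ := P.rev.isTerminal_restrict_init t.rev
      (by rw [P.rev_e, Fin.rev_rev, ht]; exact hnl x hxE)
    rw [← c5'] at hT₂
    rw [P.rev_e, Fin.rev_rev, ht] at hT₂
    exact hT₂

end Final
section Statements

variable {α : Type*}

theorem terminal_of_parallel_connection_decomposition
    (M : Matroid α) (hM : IsLPM M) (hc : M.IsConnected)
    (S₁ S₂ : Set α) (x : α) (h₁ : S₁ ⊂ M.E) (h₂ : S₂ ⊂ M.E)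
    (hx : S₁ ∩ S₂ = {x})
    (hpc : IsParallelConnOf M (M ↾ S₁) (M ↾ S₂) x)
    (h2c : ¬ ∃ C, M.IsCircuit' C ∧ x ∈ C ∧ C.ncard = 2) :
    IsTerminal (M ↾ S₁) x ∧ IsTerminal (M ↾ S₂) x := by
  obtain ⟨n, r, ⟨P⟩⟩ := hM
  have hxS : x ∈ S₁ := pc_xS hx
  have hxE : x ∈ M.E := h₁.subset hxS
  obtain ⟨t, ht⟩ := P.exists_pos hxE
  have hn : 0 < n := t.pos
  have hEST : M.E = S₁ ∪ S₂ := pc_ground hpc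
  have h0E : P.e ⟨0, hn⟩ ∈ M.E := by rw [← P.ground]; exact ⟨⟨0, hn⟩, rfl⟩
  rcases (hEST ▸ h0E : P.e ⟨0, hn⟩ ∈ S₁ ∪ S₂) with h0 | h0
  · exact main_aux P hc h₁ h₂ hx hpc h2c hn h0
  · have hTS : S₂ ∩ S₁ = {x} := by rw [Set.inter_comm]; exact hx
    exact (main_aux P hc h₂ h₁ hTS hpc.swap h2c hn h0).symm

end Statements
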